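/- For an integer t ≥ 5, if e1 and e2 are two non-adjacent edges of the complete graph K_t, then the number of copies of the graph P_4^+ in K_t containing both e1 and e2 is exactly 8(t-4). -/

import Mathlib

open SimpleGraph

/-- `P₄⁺`: the tree on 5 vertices obtained from the path `0-1-2-3` by attaching the pendant
edge `1-4` to the inner vertex `1` (degree sequence `(3,2,1,1,1)`). -/
def p4plus : SimpleGraph (Fin 5) :=
  SimpleGraph.fromEdgeSet {s(0, 1), s(1, 2), s(2, 3), s(1, 4)}

set_option maxHeartbeats 1600000

section Aux

variable {t : ℕ}

def copy5 (x1 l x2 x3 v : Fin t) : SimpleGraph.Subgraph (⊤ : SimpleGraph (Fin t)) where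
  verts := {x1, l, x2, x3, v}
  Adj u w := u ≠ w ∧ ((u = x1 ∧ w = l) ∨ (u = l ∧ w = x1) ∨ (u = x1 ∧ w = v) ∨
    (u = v ∧ w = x1) ∨ (u = x1 ∧ w = x2) ∨ (u = x2 ∧ w = x1) ∨ (u = x2 ∧ w = x3) ∨
    (u = x3 ∧ w = x2))
  adj_sub h := by simpa using h.1
  edge_vert h := by
    simp only [Set.mem_insert_iff, Set.mem_singleton_iff]
    tauto
  symm := ⟨fun u w h => ⟨h.1.symm, by tauto⟩⟩

lemma copy5_adj (x1 l x2 x3 v u w : Fin t) :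
    (copy5 x1 l x2 x3 v).Adj u w ↔ u ≠ w ∧ ((u = x1 ∧ w = l) ∨ (u = l ∧ w = x1) ∨
      (u = x1 ∧ w = v) ∨ (u = v ∧ w = x1) ∨ (u = x1 ∧ w = x2) ∨ (u = x2 ∧ w = x1) ∨
      (u = x2 ∧ w = x3) ∨ (u = x3 ∧ w = x2)) := Iff.rfl

lemma copy5_swap (x1 l x2 x3 v : Fin t) : copy5 x1 l x2 x3 v = copy5 x1 v x2 x3 l := by
  ext u w
  · constructor <;>
      (intro h; simp only [copy5, Set.mem_insert_iff, Set.mem_singleton_iff] at h ⊢; tauto)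
  · rw [copy5_adj, copy5_adj]; tauto
lemma p4plus_adj (i j : Fin 5) : p4plus.Adj i j ↔
    ((i = 1 ∧ j = 0) ∨ (i = 0 ∧ j = 1) ∨ (i = 1 ∧ j = 4) ∨ (i = 4 ∧ j = 1) ∨
     (i = 1 ∧ j = 2) ∨ (i = 2 ∧ j = 1) ∨ (i = 2 ∧ j = 3) ∨ (i = 3 ∧ j = 2)) := by
  constructor
  · intro h
    rw [p4plus, fromEdgeSet_adj] at h
    obtain ⟨hm, hne⟩ := h
    simp only [Set.mem_insert_iff, Set.mem_singleton_iff, Sym2.eq, Sym2.rel_iff',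
      Prod.mk.injEq, Prod.swap_prod_mk] at hm
    tauto
  · intro h
    rw [p4plus, fromEdgeSet_adj]
    rcases h with ⟨h1,h2⟩|⟨h1,h2⟩|⟨h1,h2⟩|⟨h1,h2⟩|⟨h1,h2⟩|⟨h1,h2⟩|⟨h1,h2⟩|⟨h1,h2⟩ <;>
      subst h1 <;> subst h2 <;> simp


lemma copy5_iso (x1 l x2 x3 v : Fin t)
    (h1 : x1 ≠ l) (h2 : x1 ≠ x2) (h3 : x1 ≠ x3) (h4 : x1 ≠ v)
    (h5 : l ≠ x2) (h6 : l ≠ x3) (h7 : l ≠ v)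
    (h8 : x2 ≠ x3) (h9 : x2 ≠ v) (h10 : x3 ≠ v) :
    Nonempty ((copy5 x1 l x2 x3 v).coe ≃g p4plus) := by
  have hg : ∀ i : Fin 5, (![l, x1, x2, x3, v] i) ∈ (copy5 x1 l x2 x3 v).verts := by
    intro i
    fin_cases i <;> simp [copy5]
  let g : Fin 5 → (copy5 x1 l x2 x3 v).verts := fun i => ⟨![l, x1, x2, x3, v] i, hg i⟩
  have hbij : Function.Bijective g := by
    constructor
    · intro i j hij
      have : (![l, x1, x2, x3, v] i) = (![l, x1, x2, x3, v] j) := congrArg Subtype.val hij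
      fin_cases i <;> fin_cases j <;> simp_all
    · rintro ⟨u, hu⟩
      simp only [copy5, Set.mem_insert_iff, Set.mem_singleton_iff] at hu
      rcases hu with h|h|h|h|h
      · exact ⟨1, by simp [g, h]⟩
      · exact ⟨0, by simp [g, h]⟩
      · exact ⟨2, by simp [g, h]⟩
      · exact ⟨3, by simp [g, h]⟩
      · exact ⟨4, by simp [g, h]⟩
  have key : ∀ i j : Fin 5, (copy5 x1 l x2 x3 v).coe.Adj (g i) (g j) ↔ p4plus.Adj i j := by
    intro i j
    rw [Subgraph.coe_adj, copy5_adj, p4plus_adj]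
    have s1 : l ≠ x1 := h1.symm
    have s2 : x2 ≠ x1 := h2.symm
    have s3 : x3 ≠ x1 := h3.symm
    have s4 : v ≠ x1 := h4.symm
    have s5 : x2 ≠ l := h5.symm
    have s6 : x3 ≠ l := h6.symm
    have s7 : v ≠ l := h7.symm
    have s8 : x3 ≠ x2 := h8.symm
    have s9 : v ≠ x2 := h9.symm
    have s10 : v ≠ x3 := h10.symm
    fin_cases i <;> fin_cases j <;> simp_all [g]
  exact ⟨(⟨Equiv.ofBijective g hbij, key _ _⟩ : p4plus ≃g (copy5 x1 l x2 x3 v).coe).symm⟩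
lemma classify (H : SimpleGraph.Subgraph (⊤ : SimpleGraph (Fin t)))
    (φ : H.coe ≃g p4plus) :
    ∃ y : Fin 5 → Fin t, Function.Injective y ∧
      H = copy5 (y 1) (y 0) (y 2) (y 3) (y 4) := by
  classical
  set y : Fin 5 → Fin t := fun i => (φ.symm i : Fin t) with hy
  have hyinj : Function.Injective y := by
    intro i j hij
    exact φ.symm.injective (Subtype.ext hij)
  have hadj : ∀ i j : Fin 5, H.Adj (y i) (y j) ↔ p4plus.Adj i j := by
    intro i j
    have := φ.symm.map_rel_iff (a := i) (b := j)
    rw [← this]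
    rfl
  have hvert : ∀ u ∈ H.verts, ∃ i, y i = u := by
    intro u hu
    exact ⟨φ ⟨u, hu⟩, by simp [hy]⟩
  refine ⟨y, hyinj, ?_⟩
  ext u w
  · constructor
    · intro hu
      obtain ⟨i, hi⟩ := hvert u hu
      subst hi
      show y i ∈ ({y 1, y 0, y 2, y 3, y 4} : Set (Fin t))
      fin_cases i <;> simp
    · intro hu
      rcases hu with h|h|h|h|h <;> (subst h; exact (φ.symm _).2)
  · constructor
    · intro h
      have hu : u ∈ H.verts := H.edge_vert h
      have hw : w ∈ H.verts := H.edge_vert (H.adj_symm h)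
      obtain ⟨i, hi⟩ := hvert u hu
      obtain ⟨j, hj⟩ := hvert w hw
      subst hi; subst hj
      have hne : y i ≠ y j := (H.adj_sub h).ne
      have hp : p4plus.Adj i j := (hadj i j).mp h
      rw [p4plus_adj] at hp
      rw [copy5_adj]
      refine ⟨hne, ?_⟩
      rcases hp with ⟨h1,h2⟩|⟨h1,h2⟩|⟨h1,h2⟩|⟨h1,h2⟩|⟨h1,h2⟩|⟨h1,h2⟩|⟨h1,h2⟩|⟨h1,h2⟩ <;>
        subst h1 <;> subst h2 <;> tauto
    · intro h
      rw [copy5_adj] at h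
      obtain ⟨hne, hc⟩ := h
      rcases hc with ⟨h1,h2⟩|⟨h1,h2⟩|⟨h1,h2⟩|⟨h1,h2⟩|⟨h1,h2⟩|⟨h1,h2⟩|⟨h1,h2⟩|⟨h1,h2⟩ <;>
        subst h1 <;> subst h2 <;> exact (hadj _ _).mpr ((p4plus_adj _ _).mpr (by simp))
lemma copy5_inj {x1 l x2 x3 v x1' l' x2' x3' v' : Fin t}
    (d1 : x1 ≠ l) (d2 : x1 ≠ x2) (d3 : x1 ≠ x3) (d4 : x1 ≠ v)
    (d5 : l ≠ x2) (d6 : l ≠ x3) (d7 : l ≠ v) (d8 : x2 ≠ x3) (d9 : x2 ≠ v) (d10 : x3 ≠ v)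
    (e1 : x1' ≠ l') (e2 : x1' ≠ x2') (e3 : x1' ≠ x3')
    (e5 : l' ≠ x2') (e6 : l' ≠ x3') (e8 : x2' ≠ x3')
    (hv : v ≠ x1' ∧ v ≠ l' ∧ v ≠ x2' ∧ v ≠ x3')
    (hv' : v' ≠ x1 ∧ v' ≠ l ∧ v' ≠ x2 ∧ v' ≠ x3)
    (h : copy5 x1 l x2 x3 v = copy5 x1' l' x2' x3' v') :
    x1 = x1' ∧ l = l' ∧ x2 = x2' ∧ x3 = x3' ∧ v = v' := by
  obtain ⟨hv1, hv2, hv3, hv4⟩ := hv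
  obtain ⟨hw1, hw2, hw3, hw4⟩ := hv'
  have hA : ∀ u w, (copy5 x1 l x2 x3 v).Adj u w → (copy5 x1' l' x2' x3' v').Adj u w := by
    intro u w hx; rw [← h]; exact hx
  clear h
  have hx1v := hA x1 v ⟨d4, Or.inr (Or.inr (Or.inl ⟨rfl, rfl⟩))⟩
  rw [copy5_adj] at hx1v
  have hvv : v = v' := by
    rcases hx1v.2 with ⟨h1,h2⟩|⟨h1,h2⟩|⟨h1,h2⟩|⟨h1,h2⟩|⟨h1,h2⟩|⟨h1,h2⟩|⟨h1,h2⟩|⟨h1,h2⟩ <;>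
      first | exact h2 | exact absurd h2 (by assumption) | exact absurd h1 (by assumption)
  subst hvv
  have hx1 : x1 = x1' := by
    rcases hx1v.2 with ⟨h1,h2⟩|⟨h1,h2⟩|⟨h1,h2⟩|⟨h1,h2⟩|⟨h1,h2⟩|⟨h1,h2⟩|⟨h1,h2⟩|⟨h1,h2⟩ <;>
      first | exact h1 | exact absurd h1 (by assumption) | exact absurd h2 (by assumption)
  subst hx1
  have hx1x2 := hA x1 x2 ⟨d2, Or.inr (Or.inr (Or.inr (Or.inr (Or.inl ⟨rfl, rfl⟩))))⟩
  rw [copy5_adj] at hx1x2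
  have hx2x3 := hA x2 x3 ⟨d8, Or.inr (Or.inr (Or.inr (Or.inr (Or.inr (Or.inr (Or.inl ⟨rfl, rfl⟩))))))⟩
  rw [copy5_adj] at hx2x3
  have hx2 : x2 = x2' := by
    rcases hx1x2.2 with ⟨h1,h2⟩|⟨h1,h2⟩|⟨h1,h2⟩|⟨h1,h2⟩|⟨h1,h2⟩|⟨h1,h2⟩|⟨h1,h2⟩|⟨h1,h2⟩ <;>
      first
      | exact h2
      | exact absurd h1 (by assumption)
      | exact absurd h2 (by assumption)
      | -- the case x2 = l'
        (exfalso
         rcases hx2x3.2 with ⟨g1,g2⟩|⟨g1,g2⟩|⟨g1,g2⟩|⟨g1,g2⟩|⟨g1,g2⟩|⟨g1,g2⟩|⟨g1,g2⟩|⟨g1,g2⟩ <;>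
          first
          | exact d2 g1.symm
          | exact d3 g2.symm
          | exact d9 g1
          | exact e5 (h2.symm.trans g1)
          | exact e6 (h2.symm.trans g1))
  subst hx2
  have hx3 : x3 = x3' := by
    rcases hx2x3.2 with ⟨h1,h2⟩|⟨h1,h2⟩|⟨h1,h2⟩|⟨h1,h2⟩|⟨h1,h2⟩|⟨h1,h2⟩|⟨h1,h2⟩|⟨h1,h2⟩ <;>
      first
      | exact h2
      | exact absurd h1 (by assumption)
      | exact absurd h2 (by assumption)
      | exact absurd h1.symm (by assumption)
      | exact absurd h2.symm (by assumption)
  subst hx3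
  have hx1l := hA x1 l ⟨d1, Or.inl ⟨rfl, rfl⟩⟩
  rw [copy5_adj] at hx1l
  have hll : l = l' := by
    rcases hx1l.2 with ⟨h1,h2⟩|⟨h1,h2⟩|⟨h1,h2⟩|⟨h1,h2⟩|⟨h1,h2⟩|⟨h1,h2⟩|⟨h1,h2⟩|⟨h1,h2⟩ <;>
      first
      | exact h2
      | exact absurd h1 (by assumption)
      | exact absurd h2 (by assumption)
      | exact absurd h1.symm (by assumption)
      | exact absurd h2.symm (by assumption)
  exact ⟨rfl, hll, rfl, rfl, rfl⟩

def fcopy (a b c d : Fin t) : Bool → Bool → Bool → Fin t →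
    SimpleGraph.Subgraph (⊤ : SimpleGraph (Fin t))
  | false, o1, o2, v => copy5 (cond o2 a b) (cond o2 b a) (cond o1 c d) (cond o1 d c) v
  | true,  o1, o2, v => copy5 (cond o2 c d) (cond o2 d c) (cond o1 a b) (cond o1 b a) v

lemma fcopy_mem (a b c d : Fin t) (hab : a ≠ b) (hac : a ≠ c) (had : a ≠ d)
    (hbc : b ≠ c) (hbd : b ≠ d) (hcd : c ≠ d) (m o1 o2 : Bool) (v : Fin t)
    (hva : v ≠ a) (hvb : v ≠ b) (hvc : v ≠ c) (hvd : v ≠ d) :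
    Nonempty ((fcopy a b c d m o1 o2 v).coe ≃g p4plus) ∧
    s(a, b) ∈ (fcopy a b c d m o1 o2 v).edgeSet ∧
    s(c, d) ∈ (fcopy a b c d m o1 o2 v).edgeSet := by
  have hba := hab.symm; have hca := hac.symm; have hda := had.symm
  have hcb := hbc.symm; have hdb := hbd.symm; have hdc := hcd.symm
  have hav := hva.symm; have hbv := hvb.symm; have hcv := hvc.symm; have hdv := hvd.symm
  cases m <;> cases o1 <;> cases o2 <;> simp only [fcopy, cond] <;>
    exact ⟨copy5_iso _ _ _ _ _ (by assumption) (by assumption) (by assumption)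
        (by assumption) (by assumption) (by assumption) (by assumption) (by assumption)
        (by assumption) (by assumption),
      (SimpleGraph.Subgraph.mem_edgeSet).mpr ⟨by assumption, by first
        | exact Or.inl ⟨rfl, rfl⟩
        | exact Or.inr (Or.inl ⟨rfl, rfl⟩)
        | exact Or.inr (Or.inr (Or.inr (Or.inr (Or.inr (Or.inr (Or.inl ⟨rfl, rfl⟩))))))
        | exact Or.inr (Or.inr (Or.inr (Or.inr (Or.inr (Or.inr (Or.inr ⟨rfl, rfl⟩))))))⟩,
      (SimpleGraph.Subgraph.mem_edgeSet).mpr ⟨by assumption, by first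
        | exact Or.inl ⟨rfl, rfl⟩
        | exact Or.inr (Or.inl ⟨rfl, rfl⟩)
        | exact Or.inr (Or.inr (Or.inr (Or.inr (Or.inr (Or.inr (Or.inl ⟨rfl, rfl⟩))))))
        | exact Or.inr (Or.inr (Or.inr (Or.inr (Or.inr (Or.inr (Or.inr ⟨rfl, rfl⟩))))))⟩⟩

def Fmap (a b c d : Fin t) (hab : a ≠ b) (hac : a ≠ c) (had : a ≠ d)
    (hbc : b ≠ c) (hbd : b ≠ d) (hcd : c ≠ d) :
    Bool × Bool × Bool × {v : Fin t // v ≠ a ∧ v ≠ b ∧ v ≠ c ∧ v ≠ d} →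
    {H : SimpleGraph.Subgraph (⊤ : SimpleGraph (Fin t)) //
      Nonempty (H.coe ≃g p4plus) ∧ s(a, b) ∈ H.edgeSet ∧ s(c, d) ∈ H.edgeSet} :=
  fun p => ⟨fcopy a b c d p.1 p.2.1 p.2.2.1 p.2.2.2.1,
    fcopy_mem a b c d hab hac had hbc hbd hcd _ _ _ _
      p.2.2.2.2.1 p.2.2.2.2.2.1 p.2.2.2.2.2.2.1 p.2.2.2.2.2.2.2⟩

lemma Fmap_inj (a b c d : Fin t) (hab : a ≠ b) (hac : a ≠ c) (had : a ≠ d)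
    (hbc : b ≠ c) (hbd : b ≠ d) (hcd : c ≠ d) :
    Function.Injective (Fmap a b c d hab hac had hbc hbd hcd) := by
  have hba := hab.symm; have hca := hac.symm; have hda := had.symm
  have hcb := hbc.symm; have hdb := hbd.symm; have hdc := hcd.symm
  rintro ⟨m, o1, o2, v, hv1, hv2, hv3, hv4⟩ ⟨m', o1', o2', w, hw1, hw2, hw3, hw4⟩ h
  have hval : fcopy a b c d m o1 o2 v = fcopy a b c d m' o1' o2' w :=
    congrArg Subtype.val h
  clear h
  have sa := hv1.symm; have sb := hv2.symm; have sc := hv3.symm; have sd := hv4.symm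
  have ta := hw1.symm; have tb := hw2.symm; have tc := hw3.symm; have td := hw4.symm
  cases m <;> cases m' <;> cases o1 <;> cases o1' <;> cases o2 <;> cases o2' <;>
    simp only [fcopy, cond] at hval <;>
    (obtain ⟨q1, q2, q3, q4, q5⟩ := copy5_inj (by assumption) (by assumption)
      (by assumption) (by assumption) (by assumption) (by assumption) (by assumption)
      (by assumption) (by assumption) (by assumption) (by assumption) (by assumption)
      (by assumption) (by assumption) (by assumption) (by assumption)
      ⟨by assumption, by assumption, by assumption, by assumption⟩
      ⟨by assumption, by assumption, by assumption, by assumption⟩ hval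
     first
      | exact absurd q1 (by assumption)
      | exact absurd q2 (by assumption)
      | exact absurd q3 (by assumption)
      | exact absurd q4 (by assumption)
      | (subst q5; rfl))

lemma Fmap_surj (a b c d : Fin t) (hab : a ≠ b) (hac : a ≠ c) (had : a ≠ d)
    (hbc : b ≠ c) (hbd : b ≠ d) (hcd : c ≠ d) :
    Function.Surjective (Fmap a b c d hab hac had hbc hbd hcd) := by
  rintro ⟨H, ⟨φ⟩, heab, hecd⟩
  obtain ⟨y, hyinj, rfl⟩ := classify H φ
  rw [SimpleGraph.Subgraph.mem_edgeSet, copy5_adj] at heab hecd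
  have hne : ∀ i j : Fin 5, i ≠ j → y i ≠ y j := fun i j hij e => hij (hyinj e)
  obtain ⟨-, hab8⟩ := heab
  obtain ⟨-, hcd8⟩ := hecd
  rcases hab8 with ⟨h1, h2⟩|⟨h1, h2⟩|⟨h1, h2⟩|⟨h1, h2⟩|⟨h1, h2⟩|⟨h1, h2⟩|⟨h1, h2⟩|⟨h1, h2⟩ <;>
    subst h1 <;> subst h2 <;>
    rcases hcd8 with ⟨g1, g2⟩|⟨g1, g2⟩|⟨g1, g2⟩|⟨g1, g2⟩|⟨g1, g2⟩|⟨g1, g2⟩|⟨g1, g2⟩|⟨g1, g2⟩ <;>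
    subst g1 <;> subst g2 <;>
    first
    | exact absurd rfl (by assumption)
    | (refine ⟨(false, true, true, ⟨y 4, hne 4 1 (by decide), hne 4 0 (by decide),
          hne 4 2 (by decide), hne 4 3 (by decide)⟩), Subtype.ext ?_⟩
       simp only [Fmap, fcopy, cond])
    | (refine ⟨(false, false, true, ⟨y 4, hne 4 1 (by decide), hne 4 0 (by decide),
          hne 4 3 (by decide), hne 4 2 (by decide)⟩), Subtype.ext ?_⟩
       simp only [Fmap, fcopy, cond])
    | (refine ⟨(false, true, false, ⟨y 4, hne 4 0 (by decide), hne 4 1 (by decide),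
          hne 4 2 (by decide), hne 4 3 (by decide)⟩), Subtype.ext ?_⟩
       simp only [Fmap, fcopy, cond])
    | (refine ⟨(false, false, false, ⟨y 4, hne 4 0 (by decide), hne 4 1 (by decide),
          hne 4 3 (by decide), hne 4 2 (by decide)⟩), Subtype.ext ?_⟩
       simp only [Fmap, fcopy, cond])
    | (refine ⟨(false, true, true, ⟨y 0, hne 0 1 (by decide), hne 0 4 (by decide),
          hne 0 2 (by decide), hne 0 3 (by decide)⟩), Subtype.ext ?_⟩
       simp only [Fmap, fcopy, cond]
       exact copy5_swap _ _ _ _ _)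
    | (refine ⟨(false, false, true, ⟨y 0, hne 0 1 (by decide), hne 0 4 (by decide),
          hne 0 3 (by decide), hne 0 2 (by decide)⟩), Subtype.ext ?_⟩
       simp only [Fmap, fcopy, cond]
       exact copy5_swap _ _ _ _ _)
    | (refine ⟨(false, true, false, ⟨y 0, hne 0 4 (by decide), hne 0 1 (by decide),
          hne 0 2 (by decide), hne 0 3 (by decide)⟩), Subtype.ext ?_⟩
       simp only [Fmap, fcopy, cond]
       exact copy5_swap _ _ _ _ _)
    | (refine ⟨(false, false, false, ⟨y 0, hne 0 4 (by decide), hne 0 1 (by decide),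
          hne 0 3 (by decide), hne 0 2 (by decide)⟩), Subtype.ext ?_⟩
       simp only [Fmap, fcopy, cond]
       exact copy5_swap _ _ _ _ _)
    | (refine ⟨(true, true, true, ⟨y 4, hne 4 2 (by decide), hne 4 3 (by decide),
          hne 4 1 (by decide), hne 4 0 (by decide)⟩), Subtype.ext ?_⟩
       simp only [Fmap, fcopy, cond])
    | (refine ⟨(true, true, false, ⟨y 4, hne 4 2 (by decide), hne 4 3 (by decide),
          hne 4 0 (by decide), hne 4 1 (by decide)⟩), Subtype.ext ?_⟩
       simp only [Fmap, fcopy, cond])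
    | (refine ⟨(true, false, true, ⟨y 4, hne 4 3 (by decide), hne 4 2 (by decide),
          hne 4 1 (by decide), hne 4 0 (by decide)⟩), Subtype.ext ?_⟩
       simp only [Fmap, fcopy, cond])
    | (refine ⟨(true, false, false, ⟨y 4, hne 4 3 (by decide), hne 4 2 (by decide),
          hne 4 0 (by decide), hne 4 1 (by decide)⟩), Subtype.ext ?_⟩
       simp only [Fmap, fcopy, cond])
    | (refine ⟨(true, true, true, ⟨y 0, hne 0 2 (by decide), hne 0 3 (by decide),
          hne 0 1 (by decide), hne 0 4 (by decide)⟩), Subtype.ext ?_⟩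
       simp only [Fmap, fcopy, cond]
       exact copy5_swap _ _ _ _ _)
    | (refine ⟨(true, true, false, ⟨y 0, hne 0 2 (by decide), hne 0 3 (by decide),
          hne 0 4 (by decide), hne 0 1 (by decide)⟩), Subtype.ext ?_⟩
       simp only [Fmap, fcopy, cond]
       exact copy5_swap _ _ _ _ _)
    | (refine ⟨(true, false, true, ⟨y 0, hne 0 3 (by decide), hne 0 2 (by decide),
          hne 0 1 (by decide), hne 0 4 (by decide)⟩), Subtype.ext ?_⟩
       simp only [Fmap, fcopy, cond]
       exact copy5_swap _ _ _ _ _)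
    | (refine ⟨(true, false, false, ⟨y 0, hne 0 3 (by decide), hne 0 2 (by decide),
          hne 0 4 (by decide), hne 0 1 (by decide)⟩), Subtype.ext ?_⟩
       simp only [Fmap, fcopy, cond]
       exact copy5_swap _ _ _ _ _)

end Aux
theorem stmt_5 (t : ℕ) (ht : 5 ≤ t) (e1 e2 : Sym2 (Fin t))
    (he1 : e1 ∈ (⊤ : SimpleGraph (Fin t)).edgeSet)
    (he2 : e2 ∈ (⊤ : SimpleGraph (Fin t)).edgeSet)
    (hnadj : ∀ v : Fin t, ¬(v ∈ e1 ∧ v ∈ e2)) :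
    Nat.card {H : (⊤ : SimpleGraph (Fin t)).Subgraph //
      Nonempty (H.coe ≃g p4plus) ∧ e1 ∈ H.edgeSet ∧ e2 ∈ H.edgeSet} = 8 * (t - 4) := by
  revert he1 he2 hnadj
  induction e1 using Sym2.ind with | _ a b =>
  induction e2 using Sym2.ind with | _ c d =>
  intro he1 he2 hnadj
  rw [SimpleGraph.mem_edgeSet, top_adj] at he1 he2
  have hac : a ≠ c := fun h => hnadj a ⟨by simp, by simp [h]⟩
  have had : a ≠ d := fun h => hnadj a ⟨by simp, by simp [h]⟩
  have hbc : b ≠ c := fun h => hnadj b ⟨by simp, by simp [h]⟩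
  have hbd : b ≠ d := fun h => hnadj b ⟨by simp, by simp [h]⟩
  have key := Nat.card_congr (Equiv.ofBijective _
    ⟨Fmap_inj a b c d he1 hac had hbc hbd he2, Fmap_surj a b c d he1 hac had hbc hbd he2⟩)
  rw [← key]
  have hK : Nat.card {v : Fin t // v ≠ a ∧ v ≠ b ∧ v ≠ c ∧ v ≠ d} = t - 4 := by
    rw [Nat.card_eq_fintype_card, Fintype.card_subtype]
    have hset : (Finset.univ.filter fun v : Fin t => v ≠ a ∧ v ≠ b ∧ v ≠ c ∧ v ≠ d)
        = Finset.univ \ {a, b, c, d} := by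
      ext x
      simp only [Finset.mem_filter, Finset.mem_univ, true_and, Finset.mem_sdiff,
        Finset.mem_insert, Finset.mem_singleton]
      tauto
    rw [hset, Finset.card_sdiff_of_subset (Finset.subset_univ _), Finset.card_univ, Fintype.card_fin]
    have h4 : ({a, b, c, d} : Finset (Fin t)).card = 4 := by
      rw [Finset.card_insert_of_notMem (by simp [he1, hac, had]),
        Finset.card_insert_of_notMem (by simp [hbc, hbd]),
        Finset.card_insert_of_notMem (by simp [he2]), Finset.card_singleton]
    rw [h4]
  rw [Nat.card_prod, Nat.card_prod, Nat.card_prod, hK,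
    Nat.card_eq_fintype_card, Fintype.card_bool]
  ring
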